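/- Let G be a connected graph and v a vertex of G with at least three pendant leaves. Then in Non-Disconnecting Arc-Kayles, no legal move ever removes any of these leaves or the vertex v, at any point of the game. -/
import Mathlib


open SimpleGraph Finset

variable {V : Type*} [Fintype V] [DecidableEq V]

/-- A legal move in Non-Disconnecting Arc-Kayles on position `s`. -/
def NDLegal (G : SimpleGraph V) (s : Finset V) (u v : V) : Prop :=
  u ∈ s ∧ v ∈ s ∧ G.Adj u v ∧
    (s \ {u, v} = ∅ ∨ (G.induce ((s \ {u, v} : Finset V) : Set V)).Connected)

/-- `NDReach G s t` : position `t` is reachable from position `s` by a (possibly empty)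
sequence of legal moves of Non-Disconnecting Arc-Kayles. -/
inductive NDReach (G : SimpleGraph V) : Finset V → Finset V → Prop
  | refl (s : Finset V) : NDReach G s s
  | step (s t : Finset V) (u v : V) (h : NDReach G s t) (h' : NDLegal G t u v) :
      NDReach G s (t \ {u, v})

lemma pick3 {ℓ : Fin 3 → V} (hinj : Function.Injective ℓ) (w : V) :
    ∃ j k : Fin 3, ℓ j ≠ ℓ k ∧ ℓ j ≠ w ∧ ℓ k ≠ w := by
  have hne : ∀ a b : Fin 3, a ≠ b → ℓ a ≠ ℓ b := fun a b h hh => h (hinj hh)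
  by_cases h0 : ℓ 0 = w
  · refine ⟨1, 2, hne 1 2 (by decide), ?_, ?_⟩
    · exact fun h => hne 1 0 (by decide) (h.trans h0.symm)
    · exact fun h => hne 2 0 (by decide) (h.trans h0.symm)
  · by_cases h1 : ℓ 1 = w
    · refine ⟨0, 2, hne 0 2 (by decide), h0, ?_⟩
      exact fun h => hne 2 1 (by decide) (h.trans h1.symm)
    · exact ⟨0, 1, hne 0 1 (by decide), h0, h1⟩

lemma key {G : SimpleGraph V} {v : V} {ℓ : Fin 3 → V} (hinj : Function.Injective ℓ)
    (hleaf : ∀ i : Fin 3, ∀ x : V, G.Adj (ℓ i) x ↔ x = v)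
    {s : Finset V} (hvs : v ∈ s) (hls : ∀ i, ℓ i ∈ s)
    {u w : V} (hlegal : NDLegal G s u w) :
    u ≠ v ∧ w ≠ v ∧ ∀ i : Fin 3, u ≠ ℓ i ∧ w ≠ ℓ i := by
  obtain ⟨hu, hw, hadj, hcon⟩ := hlegal
  have hlv : ∀ i, ℓ i ≠ v := fun i => G.ne_of_adj ((hleaf i v).mpr rfl)
  -- main claim: v cannot be u or w
  have main : v = u ∨ v = w → False := by
    intro hor
    -- pick two leaves avoiding both u and w
    have hvnot : v ∉ ({u, w} : Finset V) → False := by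
      intro h
      exact h (by rcases hor with rfl | rfl <;> simp)
    obtain ⟨j, k, hjk, hj, hk⟩ : ∃ j k : Fin 3, ℓ j ≠ ℓ k ∧
        (ℓ j ≠ u ∧ ℓ j ≠ w) ∧ (ℓ k ≠ u ∧ ℓ k ≠ w) := by
      rcases hor with rfl | rfl
      · obtain ⟨j, k, hjk, hj, hk⟩ := pick3 hinj w
        exact ⟨j, k, hjk, ⟨(hlv j), hj⟩, ⟨(hlv k), hk⟩⟩
      · obtain ⟨j, k, hjk, hj, hk⟩ := pick3 hinj u
        exact ⟨j, k, hjk, ⟨hj, hlv j⟩, ⟨hk, hlv k⟩⟩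
    have hjm : ℓ j ∈ s \ {u, w} := by
      simp [Finset.mem_sdiff, hls j, hj.1, hj.2]
    have hkm : ℓ k ∈ s \ {u, w} := by
      simp [Finset.mem_sdiff, hls k, hk.1, hk.2]
    rcases hcon with hemp | hconn
    · rw [hemp] at hjm; exact absurd hjm (Finset.notMem_empty _)
    · have hjm' : ℓ j ∈ ((s \ {u, w} : Finset V) : Set V) := hjm
      have hkm' : ℓ k ∈ ((s \ {u, w} : Finset V) : Set V) := hkm
      have haux : ∀ (a b : ((s \ {u, w} : Finset V) : Set V)),
          (G.induce ((s \ {u, w} : Finset V) : Set V)).Walk a b →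
          (a : V) = ℓ j → (b : V) = ℓ k → False := by
        intro a b p ha hb
        cases p with
        | nil => exact hjk ((ha.symm.trans hb))
        | cons h p' =>
          rename_i c
          have hb2 : G.Adj (a : V) (c : V) := h
          rw [ha] at hb2
          have hcv : (c : V) = v := (hleaf j (c : V)).mp hb2
          have hbm : (c : V) ∈ s \ {u, w} := c.2
          rw [hcv, Finset.mem_sdiff] at hbm
          exact hvnot hbm.2
      obtain ⟨p⟩ := hconn.preconnected ⟨ℓ j, hjm'⟩ ⟨ℓ k, hkm'⟩
      exact haux _ _ p rfl rfl
  have hu' : u ≠ v := fun h => main (Or.inl h.symm)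
  have hw' : w ≠ v := fun h => main (Or.inr h.symm)
  refine ⟨hu', hw', fun i => ⟨?_, ?_⟩⟩
  · rintro rfl
    exact hw' ((hleaf i w).mp hadj)
  · rintro rfl
    exact hu' ((hleaf i u).mp hadj.symm)

theorem stmt_9 (G : SimpleGraph V) (hconn : G.Connected) (v : V) (ℓ : Fin 3 → V)
    (hinj : Function.Injective ℓ)
    (hleaf : ∀ i : Fin 3, ∀ x : V, G.Adj (ℓ i) x ↔ x = v) :
    ∀ s : Finset V, NDReach G Finset.univ s →
      ∀ u w : V, NDLegal G s u w →
        u ≠ v ∧ w ≠ v ∧ ∀ i : Fin 3, u ≠ ℓ i ∧ w ≠ ℓ i := by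
  have inv : ∀ s : Finset V, NDReach G Finset.univ s → v ∈ s ∧ ∀ i, ℓ i ∈ s := by
    intro s h
    induction h with
    | refl => exact ⟨Finset.mem_univ _, fun i => Finset.mem_univ _⟩
    | step t u w h h' ih =>
      obtain ⟨hvt, hlt⟩ := ih
      obtain ⟨hu, hw, hrest⟩ := key hinj hleaf hvt hlt h'
      constructor
      · rw [Finset.mem_sdiff]
        exact ⟨hvt, by simp [Ne.symm hu, Ne.symm hw]⟩
      · intro i
        rw [Finset.mem_sdiff]
        exact ⟨hlt i, by simp [Ne.symm (hrest i).1, Ne.symm (hrest i).2]⟩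
  intro s hreach u w hlegal
  obtain ⟨hvs, hls⟩ := inv s hreach
  exact key hinj hleaf hvs hls hlegal
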